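/- Let Y and Z be independent random variables with Y ~ Exp(λ_Y) and Z ~ Exp(λ_Z), where λ_Y, λ_Z > 0. Let μ : (0,∞) → (0,∞) satisfy μ(δ)/δ → a as δ → 0⁺ for some finite a ≥ 0, and let h : (0,∞) → (0,∞) be continuous with h(δ) → 0 and δ/h(δ) → d₁ for some finite d₁ as δ → 0⁺. Then lim_{δ → 0⁺} (1/h(δ)) · P( δ · f(Y/δ, Z/μ(δ)) < h(δ) ) = λ_Y + a·λ_Z. -/

import Mathlib

set_option maxHeartbeats 1000000


open MeasureTheory ProbabilityTheory Filter Set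

/-- The amplify-and-forward combining function `f(x,y) = x·y/(x+y+1)`. -/
noncomputable def f (x y : ℝ) : ℝ := x * y / (x + y + 1)



lemma la_expMeasure_Iic {r : ℝ} (hr : 0 < r) {x : ℝ} (hx : 0 ≤ x) :
    expMeasure r (Iic x) = ENNReal.ofReal (1 - Real.exp (-(r * x))) := by
  have := isProbabilityMeasure_expMeasure hr
  rw [← ofReal_cdf]
  congr 1
  have := cdf_expMeasure_eq hr x
  rw [this, if_pos hx]

lemma la_exp_sub_exp_le {r s t : ℝ} (hr : 0 < r) (hs : 0 ≤ s) (hst : s ≤ t) :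
    Real.exp (-(r * s)) - Real.exp (-(r * t)) ≤ r * (t - s) := by
  have heq : Real.exp (-(r*t)) = Real.exp (-(r*s)) * Real.exp (-(r*(t-s))) := by
    rw [← Real.exp_add]; ring_nf
  have h1 : Real.exp (-(r*s)) ≤ 1 := Real.exp_le_one_iff.2 (by nlinarith)
  have h2 : -(r*(t-s)) + 1 ≤ Real.exp (-(r*(t-s))) := Real.add_one_le_exp _
  have h3 : Real.exp (-(r*(t-s))) ≤ 1 := Real.exp_le_one_iff.2 (by nlinarith)
  nlinarith [Real.exp_pos (-(r*s))]

lemma la_expMeasure_Ioc_le {r : ℝ} (hr : 0 < r) {s t : ℝ} (hs : 0 ≤ s) (hst : s ≤ t) :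
    expMeasure r (Ioc s t) ≤ ENNReal.ofReal (r * (t - s)) := by
  have := isProbabilityMeasure_expMeasure hr
  have hsub : Ioc s t = Iic t \ Iic s := by ext x; simp [and_comm]
  rw [hsub, measure_diff (Iic_subset_Iic.2 hst) (measurableSet_Iic).nullMeasurableSet
    (measure_ne_top _ _), la_expMeasure_Iic hr (hs.trans hst), la_expMeasure_Iic hr hs,
    ← ENNReal.ofReal_sub _ (by
      nlinarith [Real.exp_le_one_iff.2 (show -(r*s) ≤ 0 by nlinarith)])]
  apply ENNReal.ofReal_le_ofReal
  have := la_exp_sub_exp_le hr hs hst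
  linarith

lemma la_expMeasure_Iio_zero {r : ℝ} (hr : 0 < r) : expMeasure r (Iio 0) = 0 := by
  have h := la_expMeasure_Iic hr (le_refl 0)
  have : expMeasure r (Iio 0) ≤ expMeasure r (Iic 0) := measure_mono Iio_subset_Iic_self
  simpa [h, Real.exp_zero] using this

lemma la_dyadic {T x : ℝ} (hT : 0 < T) {N : ℕ} (h1 : T < x) (h2 : x ≤ T * 2 ^ N) :
    ∃ k < N, T * 2 ^ k < x ∧ x ≤ T * 2 ^ (k + 1) := by
  induction N with
  | zero => simp at h2; exact absurd (h1.trans_le h2) (lt_irrefl _)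
  | succ n ih =>
    by_cases hc : x ≤ T * 2 ^ n
    · obtain ⟨k, hk, hp⟩ := ih hc; exact ⟨k, Nat.lt_succ_of_lt hk, hp⟩
    · exact ⟨n, Nat.lt_succ_self n, lt_of_not_ge hc, h2⟩

lemma la_slope {r : ℝ} (hr : 0 < r) :
    Tendsto (fun x => (1 - Real.exp (-(r * x))) / x) (nhdsWithin 0 (Ioi 0)) (nhds r) := by
  have hd : HasDerivAt (fun x : ℝ => 1 - Real.exp (-(r * x))) r 0 := by
    have h2 : HasDerivAt (fun a : ℝ => 1 + -Real.exp (-(r * a))) (r * Real.exp (-(r*0))) 0 :=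
      (hasDerivAt_neg_exp_mul_exp).const_add 1
    simpa [sub_eq_add_neg, Real.exp_zero] using h2
  have h3 := (hasDerivAt_iff_tendsto_slope.mp hd).mono_left
    (nhdsWithin_mono 0 (fun x hx => ne_of_gt hx))
  refine h3.congr' ?_
  filter_upwards [self_mem_nhdsWithin] with x hx
  rw [slope_def_field]
  simp [Real.exp_zero]

lemma la_f_iff {δ mu hh y z : ℝ} (hδ : 0 < δ) (hmu : 0 < mu) (hhh : 0 < hh)
    (hy : 0 ≤ y) (hz : 0 ≤ z) :
    δ * f (y / δ) (z / mu) < hh ↔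
      (y - hh) * (z - hh * (mu / δ)) < hh * (mu + hh * (mu / δ)) := by
  have hD : (0:ℝ) < y/δ + z/mu + 1 := by positivity
  have hy' : y/δ * δ = y := div_mul_cancel₀ y hδ.ne'
  have hz' : z/mu * mu = z := div_mul_cancel₀ z hmu.ne'
  have hηδ : hh * (mu/δ) * δ = hh * mu := by field_simp
  unfold f
  rw [← mul_div_assoc, div_lt_iff₀ hD]
  constructor
  · intro H
    have H2 := mul_lt_mul_of_pos_right H (mul_pos hδ hmu)
    have e1 : δ * (y/δ * (z/mu)) * (δ * mu) = y * z * δ := by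
      field_simp; try ring_nf; try exact Or.inl trivial
    have e2 : hh * (y/δ + z/mu + 1) * (δ * mu) = hh * (mu * y + δ * z + δ * mu) := by
      field_simp; try ring_nf; try exact Or.inl trivial
    rw [e1, e2] at H2
    nlinarith [hηδ]
  · intro H
    rw [← mul_lt_mul_iff_of_pos_right (mul_pos hδ hmu)]
    have e1 : δ * (y/δ * (z/mu)) * (δ * mu) = y * z * δ := by field_simp; try ring_nf; try exact Or.inl trivial
    have e2 : hh * (y/δ + z/mu + 1) * (δ * mu) = hh * (mu * y + δ * z + δ * mu) := by
      field_simp; try ring_nf; try exact Or.inl trivial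
    rw [e1, e2]
    nlinarith [hηδ]


lemma la_prob_bounds
    {Ω : Type*} [MeasurableSpace Ω] (P : Measure Ω) [IsProbabilityMeasure P]
    {lamY lamZ : ℝ} (hlamY : 0 < lamY) (hlamZ : 0 < lamZ)
    {Y Z : Ω → ℝ} (hY : Measurable Y) (hZ : Measurable Z)
    (hYdist : Measure.map Y P = expMeasure lamY)
    (hZdist : Measure.map Z P = expMeasure lamZ)
    (hindep : IndepFun Y Z P)
    {δ mu hh : ℝ} (hδ : 0 < δ) (hmu : 0 < mu) (hhh : 0 < hh) (N : ℕ)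
    (hTN : 1 / hh ≤ hh ^ 2 * 2 ^ N)
    (η c : ℝ) (hηdef : η = hh * (mu / δ)) (hcdef : c = hh * (mu + η)) :
    |(P {ω | δ * f (Y ω / δ) (Z ω / mu) < hh}).toReal
      - ((1 - Real.exp (-(lamY * hh))) + (1 - Real.exp (-(lamZ * η)))
        - (1 - Real.exp (-(lamY * hh))) * (1 - Real.exp (-(lamZ * η))))|
      ≤ lamY * hh ^ 2 + lamZ * (c * hh) + N * (lamY * lamZ * c) := by
  have hη : 0 < η := by rw [hηdef]; positivity
  have hc : 0 < c := by rw [hcdef]; positivity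
  set T : ℝ := hh ^ 2 with hTdef
  have hT : 0 < T := by positivity
  set FY : ℝ := 1 - Real.exp (-(lamY * hh)) with hFYdef
  set FZ : ℝ := 1 - Real.exp (-(lamZ * η)) with hFZdef
  have hFY0 : 0 ≤ FY := by
    rw [hFYdef]; nlinarith [Real.exp_le_one_iff.2 (show -(lamY*hh) ≤ 0 by nlinarith)]
  have hFZ0 : 0 ≤ FZ := by
    rw [hFZdef]; nlinarith [Real.exp_le_one_iff.2 (show -(lamZ*η) ≤ 0 by nlinarith)]
  have PYs : ∀ s : Set ℝ, MeasurableSet s → P (Y ⁻¹' s) = expMeasure lamY s := by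
    intro s hs; rw [← hYdist, Measure.map_apply hY hs]
  have PZs : ∀ s : Set ℝ, MeasurableSet s → P (Z ⁻¹' s) = expMeasure lamZ s := by
    intro s hs; rw [← hZdist, Measure.map_apply hZ hs]
  set S := {ω | δ * f (Y ω / δ) (Z ω / mu) < hh} with hSdef
  set L := Y ⁻¹' Iic hh ∪ Z ⁻¹' Iic η with hLdef
  set Nn := Y ⁻¹' Ici 0 ∩ Z ⁻¹' Ici 0 with hNndef
  set M := {ω | hh < Y ω ∧ η < Z ω ∧ (Y ω - hh) * (Z ω - η) < c} with hMdef
  -- null complement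
  have hNn0 : P Nnᶜ = 0 := by
    rw [hNndef, compl_inter]
    refine measure_union_null ?_ ?_
    · have : (Y ⁻¹' Ici 0)ᶜ = Y ⁻¹' Iio 0 := by
        rw [← preimage_compl, compl_Ici]
      rw [this, PYs _ measurableSet_Iio, la_expMeasure_Iio_zero hlamY]
    · have : (Z ⁻¹' Ici 0)ᶜ = Z ⁻¹' Iio 0 := by
        rw [← preimage_compl, compl_Ici]
      rw [this, PZs _ measurableSet_Iio, la_expMeasure_Iio_zero hlamZ]
  -- inclusion 1 : L ∩ Nn ⊆ S
  have hinc1 : L ∩ Nn ⊆ S := by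
    rintro ω ⟨hL, hy0, hz0⟩
    simp only [mem_preimage, mem_Ici] at hy0 hz0
    have hiff := la_f_iff (y := Y ω) (z := Z ω) hδ hmu hhh hy0 hz0
    rw [hSdef, mem_setOf_eq, hiff, ← hηdef, ← hcdef]
    rcases hL with hYle | hZle
    · simp only [mem_preimage, mem_Iic] at hYle
      nlinarith [mul_nonneg (sub_nonneg.2 hYle) hz0, mul_nonneg hy0 hη.le,
        mul_pos hhh hmu]
    · simp only [mem_preimage, mem_Iic] at hZle
      nlinarith [mul_nonneg (sub_nonneg.2 hZle) hy0, mul_nonneg hz0 hhh.le,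
        mul_pos hhh hmu]
  -- inclusion 2 : S ∩ Nn ⊆ L ∪ M
  have hinc2 : S ∩ Nn ⊆ L ∪ M := by
    rintro ω ⟨hS, hy0, hz0⟩
    simp only [mem_preimage, mem_Ici] at hy0 hz0
    by_cases hY1 : Y ω ≤ hh
    · exact Or.inl (Or.inl hY1)
    · by_cases hZ1 : Z ω ≤ η
      · exact Or.inl (Or.inr hZ1)
      · refine Or.inr ⟨lt_of_not_ge hY1, lt_of_not_ge hZ1, ?_⟩
        have hiff := la_f_iff (y := Y ω) (z := Z ω) hδ hmu hhh hy0 hz0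
        rw [hSdef, mem_setOf_eq, hiff, ← hηdef, ← hcdef] at hS
        exact hS
  -- covering of M
  set A := Y ⁻¹' Ioc hh (hh + T) with hAdef
  set C := Z ⁻¹' Ioc η (η + c / (T * 2 ^ N)) with hCdef
  set B : ℕ → Set Ω := fun k =>
    Y ⁻¹' Ioc (hh + T * 2 ^ k) (hh + T * 2 ^ (k + 1)) ∩
      Z ⁻¹' Ioc η (η + c / (T * 2 ^ k)) with hBdef
  have hcover : M ⊆ (A ∪ C) ∪ ⋃ k ∈ Finset.range N, B k := by
    rintro ω ⟨h1, h2, h3⟩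
    set u := Y ω - hh with hudef
    set v := Z ω - η with hvdef
    have hu : 0 < u := by simp [hudef]; linarith
    have hv : 0 < v := by simp [hvdef]; linarith
    rcases le_or_gt u T with hcase | hcase
    · exact Or.inl (Or.inl (by simp [hAdef, mem_Ioc]; constructor <;> linarith))
    · rcases le_or_gt u (T * 2 ^ N) with hcase2 | hcase2
      · obtain ⟨k, hkN, hk1, hk2⟩ := la_dyadic hT hcase hcase2
        refine Or.inr ?_
        rw [mem_iUnion₂]
        refine ⟨k, Finset.mem_range.2 hkN, ?_, ?_⟩
        · simp only [mem_preimage, mem_Ioc]; constructor <;> linarith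
        · simp only [mem_preimage, mem_Ioc]
          have hpos : (0:ℝ) < T * 2 ^ k := by positivity
          have : v * (T * 2 ^ k) < c := by
            calc v * (T * 2 ^ k) ≤ v * u := by
                  apply mul_le_mul_of_nonneg_left hk1.le hv.le
              _ = u * v := mul_comm _ _
              _ < c := h3
          have hvle : v ≤ c / (T * 2 ^ k) := le_of_lt ((lt_div_iff₀ hpos).2 this)
          constructor <;> [linarith; linarith]
      · refine Or.inl (Or.inr ?_)
        simp only [hCdef, mem_preimage, mem_Ioc]
        have hpos : (0:ℝ) < T * 2 ^ N := by positivity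
        have : v * (T * 2 ^ N) < c := by
          calc v * (T * 2 ^ N) ≤ v * u := mul_le_mul_of_nonneg_left hcase2.le hv.le
            _ = u * v := mul_comm _ _
            _ < c := h3
        have hvle : v ≤ c / (T * 2 ^ N) := le_of_lt ((lt_div_iff₀ hpos).2 this)
        constructor <;> [linarith; linarith]
  -- measure bounds
  have hPA : P A ≤ ENNReal.ofReal (lamY * T) := by
    rw [hAdef, PYs _ measurableSet_Ioc]
    have := la_expMeasure_Ioc_le hlamY hhh.le (le_add_of_nonneg_right hT.le)
      (r := lamY) (s := hh) (t := hh + T)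
    simpa using this
  have hPC : P C ≤ ENNReal.ofReal (lamZ * (c * hh)) := by
    rw [hCdef, PZs _ measurableSet_Ioc]
    refine le_trans (la_expMeasure_Ioc_le hlamZ hη.le (le_add_of_nonneg_right (by positivity)))
      (ENNReal.ofReal_le_ofReal ?_)
    have h1 : c / (T * 2 ^ N) ≤ c * hh := by
      rw [div_le_iff₀ (by positivity)]
      have h2 : 1 ≤ hh * (T * 2 ^ N) := by
        calc (1:ℝ) = hh * (1 / hh) := by field_simp
          _ ≤ hh * (hh ^ 2 * 2 ^ N) := by
              apply mul_le_mul_of_nonneg_left hTN hhh.le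
          _ = hh * (T * 2 ^ N) := by rw [hTdef]
      nlinarith
    have : η + c / (T * 2 ^ N) - η = c / (T * 2 ^ N) := by ring
    rw [this]
    nlinarith
  have hPB : ∀ k, P (B k) ≤ ENNReal.ofReal (lamY * lamZ * c) := by
    intro k
    have hpos : (0:ℝ) < T * 2 ^ k := by positivity
    rw [hBdef]
    have := hindep.measure_inter_preimage_eq_mul
      (Ioc (hh + T * 2 ^ k) (hh + T * 2 ^ (k + 1))) (Ioc η (η + c / (T * 2 ^ k)))
      measurableSet_Ioc measurableSet_Ioc
    simp only at this ⊢
    rw [this, PYs _ measurableSet_Ioc, PZs _ measurableSet_Ioc]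
    have hb1 : expMeasure lamY (Ioc (hh + T * 2 ^ k) (hh + T * 2 ^ (k + 1)))
        ≤ ENNReal.ofReal (lamY * (T * 2 ^ k)) := by
      have := la_expMeasure_Ioc_le hlamY (by positivity : (0:ℝ) ≤ hh + T * 2 ^ k)
        (by rw [pow_succ]; nlinarith [pow_pos (show (0:ℝ) < 2 by norm_num) k, hT] :
          hh + T * 2 ^ k ≤ hh + T * 2 ^ (k + 1))
      refine le_trans this (ENNReal.ofReal_le_ofReal ?_)
      have : hh + T * 2 ^ (k+1) - (hh + T * 2 ^ k) = T * 2 ^ k := by ring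
      rw [this]
    have hb2 : expMeasure lamZ (Ioc η (η + c / (T * 2 ^ k)))
        ≤ ENNReal.ofReal (lamZ * (c / (T * 2 ^ k))) := by
      have := la_expMeasure_Ioc_le hlamZ hη.le
        (le_add_of_nonneg_right (by positivity) : η ≤ η + c / (T * 2 ^ k))
      refine le_trans this (ENNReal.ofReal_le_ofReal (le_of_eq ?_))
      congr 1; ring
    refine le_trans (mul_le_mul' hb1 hb2) ?_
    rw [← ENNReal.ofReal_mul (by positivity)]
    apply ENNReal.ofReal_le_ofReal
    have : lamY * (T * 2 ^ k) * (lamZ * (c / (T * 2 ^ k))) = lamY * lamZ * c := by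
      field_simp
    rw [this]
  have hPM : P M ≤ ENNReal.ofReal (lamZ * (c * hh) + lamY * T + N * (lamY * lamZ * c)) := by
    calc P M ≤ P ((A ∪ C) ∪ ⋃ k ∈ Finset.range N, B k) := measure_mono hcover
      _ ≤ P (A ∪ C) + P (⋃ k ∈ Finset.range N, B k) := measure_union_le _ _
      _ ≤ (P A + P C) + ∑ k ∈ Finset.range N, P (B k) :=
          add_le_add (measure_union_le _ _) (measure_biUnion_finset_le _ _)
      _ ≤ (ENNReal.ofReal (lamY * T) + ENNReal.ofReal (lamZ * (c * hh)))
            + ∑ k ∈ Finset.range N, ENNReal.ofReal (lamY * lamZ * c) :=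
          add_le_add (add_le_add hPA hPC) (Finset.sum_le_sum fun k _ => hPB k)
      _ = ENNReal.ofReal (lamZ * (c * hh) + lamY * T + N * (lamY * lamZ * c)) := by
          rw [Finset.sum_const, Finset.card_range, nsmul_eq_mul]
          rw [← ENNReal.ofReal_natCast N, ← ENNReal.ofReal_mul (by positivity)]
          rw [← ENNReal.ofReal_add (by positivity) (by positivity),
            ← ENNReal.ofReal_add (by positivity) (by positivity)]
          congr 1; ring
  -- CDF values
  have hPYh : P (Y ⁻¹' Iic hh) = ENNReal.ofReal FY := by
    rw [PYs _ measurableSet_Iic, la_expMeasure_Iic hlamY hhh.le]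
  have hPZη : P (Z ⁻¹' Iic η) = ENNReal.ofReal FZ := by
    rw [PZs _ measurableSet_Iic, la_expMeasure_Iic hlamZ hη.le]
  have hPL : (P L).toReal = FY + FZ - FY * FZ := by
    have key : P L + P (Y ⁻¹' Iic hh ∩ Z ⁻¹' Iic η)
        = P (Y ⁻¹' Iic hh) + P (Z ⁻¹' Iic η) :=
      measure_union_add_inter _ (hZ measurableSet_Iic)
    have hint : P (Y ⁻¹' Iic hh ∩ Z ⁻¹' Iic η) = ENNReal.ofReal (FY * FZ) := by
      rw [hindep.measure_inter_preimage_eq_mul _ _ measurableSet_Iic measurableSet_Iic,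
        hPYh, hPZη, ← ENNReal.ofReal_mul hFY0]
    rw [hint, hPYh, hPZη] at key
    have := congrArg ENNReal.toReal key
    rw [ENNReal.toReal_add (measure_ne_top _ _) ENNReal.ofReal_ne_top,
      ENNReal.toReal_add ENNReal.ofReal_ne_top ENNReal.ofReal_ne_top,
      ENNReal.toReal_ofReal (by positivity), ENNReal.toReal_ofReal hFY0,
      ENNReal.toReal_ofReal hFZ0] at this
    linarith
  -- lower bound
  have hlow : (P L).toReal ≤ (P S).toReal := by
    apply ENNReal.toReal_mono (measure_ne_top _ _)
    calc P L ≤ P ((L ∩ Nn) ∪ Nnᶜ) := measure_mono (fun ω hω => by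
          by_cases hn : ω ∈ Nn
          · exact Or.inl ⟨hω, hn⟩
          · exact Or.inr hn)
      _ ≤ P (L ∩ Nn) + P Nnᶜ := measure_union_le _ _
      _ = P (L ∩ Nn) := by rw [hNn0, add_zero]
      _ ≤ P S := measure_mono hinc1
  -- upper bound
  have hup : (P S).toReal ≤ (P L).toReal + (P M).toReal := by
    rw [← ENNReal.toReal_add (measure_ne_top _ _) (measure_ne_top _ _)]
    apply ENNReal.toReal_mono
      (by exact ENNReal.add_ne_top.2 ⟨measure_ne_top _ _, measure_ne_top _ _⟩)
    calc P S ≤ P ((S ∩ Nn) ∪ Nnᶜ) := measure_mono (fun ω hω => by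
          by_cases hn : ω ∈ Nn
          · exact Or.inl ⟨hω, hn⟩
          · exact Or.inr hn)
      _ ≤ P (S ∩ Nn) + P Nnᶜ := measure_union_le _ _
      _ = P (S ∩ Nn) := by rw [hNn0, add_zero]
      _ ≤ P (L ∪ M) := measure_mono hinc2
      _ ≤ P L + P M := measure_union_le _ _
  have hPMr : (P M).toReal ≤ lamY * T + lamZ * (c * hh) + N * (lamY * lamZ * c) := by
    have hnn' : (0:ℝ) ≤ lamZ * (c * hh) + lamY * T + N * (lamY * lamZ * c) := by positivity
    have h' := ENNReal.toReal_le_of_le_ofReal hnn' hPM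
    linarith
  rw [hPL] at hlow hup
  have hnn : (0:ℝ) ≤ lamY * T + lamZ * (c * hh) + N * (lamY * lamZ * c) := by positivity
  rw [abs_le]
  constructor
  · linarith
  · linarith

/-- **Lemma 2 of the paper.**
For independent `Y ~ Exp(λ_Y)`, `Z ~ Exp(λ_Z)`, with `μ(δ)/δ → a` and a continuous
positive `h` with `h(δ) → 0` and `δ/h(δ) → d₁ < ∞` as `δ → 0⁺`,
`lim_{δ → 0⁺} (1/h(δ)) · P( δ·f(Y/δ, Z/μ(δ)) < h(δ) ) = λ_Y + a·λ_Z`. -/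
theorem lemma2_relay_path_asymptotics
    {Ω : Type*} [MeasurableSpace Ω] (P : Measure Ω) [IsProbabilityMeasure P]
    (lamY lamZ : ℝ) (hlamY : 0 < lamY) (hlamZ : 0 < lamZ)
    (Y Z : Ω → ℝ) (hY : Measurable Y) (hZ : Measurable Z)
    (hYdist : Measure.map Y P = expMeasure lamY)
    (hZdist : Measure.map Z P = expMeasure lamZ)
    (hindep : IndepFun Y Z P)
    (μ : ℝ → ℝ) (hμ_pos : ∀ δ ∈ Ioi (0:ℝ), 0 < μ δ)
    (a : ℝ) (ha : 0 ≤ a)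
    (hμa : Tendsto (fun δ => μ δ / δ) (nhdsWithin 0 (Ioi 0)) (nhds a))
    (h : ℝ → ℝ) (hh_pos : ∀ δ ∈ Ioi (0:ℝ), 0 < h δ)
    (hh_cont : ContinuousOn h (Ioi 0))
    (hh_lim : Tendsto h (nhdsWithin 0 (Ioi 0)) (nhds 0))
    (d₁ : ℝ)
    (hd₁ : Tendsto (fun δ => δ / h δ) (nhdsWithin 0 (Ioi 0)) (nhds d₁)) :
    Tendsto
      (fun δ => (1 / h δ) * (P {ω | δ * f (Y ω / δ) (Z ω / μ δ) < h δ}).toReal)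
      (nhdsWithin 0 (Ioi 0)) (nhds (lamY + a * lamZ)) := by
  set l := nhdsWithin (0:ℝ) (Ioi 0) with hldef
  have hmem : ∀ᶠ δ in l, δ ∈ Ioi (0:ℝ) := eventually_mem_nhdsWithin
  have hhpos : ∀ᶠ δ in l, 0 < h δ := hmem.mono (fun δ hδ => hh_pos δ hδ)
  have hμpos : ∀ᶠ δ in l, 0 < μ δ := hmem.mono (fun δ hδ => hμ_pos δ hδ)
  have hδlim : Tendsto (fun δ : ℝ => δ) l (nhds 0) :=
    (tendsto_id : Tendsto id l l).mono_right nhdsWithin_le_nhds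
  -- μ → 0
  have hμ0 : Tendsto μ l (nhds 0) := by
    have h1 : Tendsto (fun δ => (μ δ / δ) * δ) l (nhds (a * 0)) := hμa.mul hδlim
    rw [mul_zero] at h1
    refine h1.congr' ?_
    filter_upwards [hmem] with δ hδ
    have hδ0 : δ ≠ 0 := ne_of_gt hδ
    field_simp
  set η : ℝ → ℝ := fun δ => h δ * (μ δ / δ) with hηdef
  have hηpos : ∀ᶠ δ in l, 0 < η δ := by
    filter_upwards [hmem, hhpos, hμpos] with δ hδ h1 h2
    have : (0:ℝ) < δ := hδ
    positivity
  have hη0 : Tendsto η l (nhds 0) := by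
    have := hh_lim.mul hμa
    rw [zero_mul] at this
    exact this
  set c : ℝ → ℝ := fun δ => h δ * (μ δ + η δ) with hcdef
  have hc0 : Tendsto c l (nhds 0) := by
    have := hh_lim.mul (hμ0.add hη0)
    simpa using this
  -- tendsto into punctured right neighborhoods
  have ht_h : Tendsto h l (nhdsWithin 0 (Ioi 0)) := by
    rw [tendsto_nhdsWithin_iff]
    exact ⟨hh_lim, hhpos.mono (fun δ hδ => hδ)⟩
  have ht_η : Tendsto η l (nhdsWithin 0 (Ioi 0)) := by
    rw [tendsto_nhdsWithin_iff]
    exact ⟨hη0, hηpos.mono (fun δ hδ => hδ)⟩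
  set FY : ℝ → ℝ := fun δ => 1 - Real.exp (-(lamY * h δ)) with hFYdef
  set FZ : ℝ → ℝ := fun δ => 1 - Real.exp (-(lamZ * η δ)) with hFZdef
  have lim1 : Tendsto (fun δ => FY δ / h δ) l (nhds lamY) := (la_slope hlamY).comp ht_h
  have lim2 : Tendsto (fun δ => FZ δ / η δ) l (nhds lamZ) := (la_slope hlamZ).comp ht_η
  have lim2' : Tendsto (fun δ => FZ δ / h δ) l (nhds (lamZ * a)) := by
    have h1 : Tendsto (fun δ => (FZ δ / η δ) * (μ δ / δ)) l (nhds (lamZ * a)) :=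
      lim2.mul hμa
    refine h1.congr' ?_
    filter_upwards [hmem, hhpos, hμpos] with δ hδ hh1 hm1
    have hδ0 : (0:ℝ) < δ := hδ
    have hδ0' : δ ≠ 0 := ne_of_gt hδ0
    have hh0' : h δ ≠ 0 := ne_of_gt hh1
    have hm0' : μ δ ≠ 0 := ne_of_gt hm1
    rw [hηdef]
    field_simp
  have limFZ0 : Tendsto FZ l (nhds 0) := by
    have h1 : Tendsto (fun δ => (FZ δ / η δ) * η δ) l (nhds (lamZ * 0)) := lim2.mul hη0
    rw [mul_zero] at h1
    refine h1.congr' ?_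
    filter_upwards [hηpos] with δ h1
    field_simp
  have limlow : Tendsto (fun δ => FY δ / h δ + FZ δ / h δ - (FY δ / h δ) * FZ δ) l
      (nhds (lamY + a * lamZ)) := by
    have := (lim1.add lim2').sub (lim1.mul limFZ0)
    have he : lamY + lamZ * a - lamY * 0 = lamY + a * lamZ := by ring
    rwa [he] at this
  -- the logarithmic factor
  set NN : ℝ → ℕ := fun δ => ⌈3 * Real.logb 2 (1 / h δ)⌉₊ with hNNdef
  set mid : ℝ → ℝ := fun δ => (NN δ : ℝ) * (μ δ + η δ) with hmiddef
  have limG : Tendsto (fun δ => Real.log (h δ) * h δ) l (nhds 0) := by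
    have h1 := (tendsto_log_mul_rpow_nhdsGT_zero (one_pos)).comp ht_h
    refine h1.congr ?_
    intro δ
    simp [Real.rpow_one]
  have limbnd : Tendsto (fun δ => (3 * (-Real.log (h δ) / Real.log 2) + 1) * (μ δ + η δ)) l
      (nhds 0) := by
    have h1 : Tendsto (fun δ =>
        (-3 / Real.log 2) * ((Real.log (h δ) * h δ) * ((μ δ / δ) * (δ / h δ))
          + (Real.log (h δ) * h δ) * (μ δ / δ)) + (μ δ + η δ)) l
        (nhds ((-3 / Real.log 2) * ((0 : ℝ) * (a * d₁) + 0 * a) + 0)) := by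
      refine Tendsto.add ?_ ?_
      · exact (tendsto_const_nhds.mul
          (((limG.mul (hμa.mul hd₁))).add (limG.mul hμa)))
      · have := hμ0.add hη0; simpa using this
    have h2 : ((-3 / Real.log 2) * ((0 : ℝ) * (a * d₁) + 0 * a) + 0) = 0 := by ring
    rw [h2] at h1
    refine h1.congr' ?_
    filter_upwards [hmem, hhpos] with δ hδ hh1
    have hδ0 : (0:ℝ) < δ := hδ
    have hlog2 : Real.log 2 ≠ 0 := by
      have := Real.log_pos (by norm_num : (1:ℝ) < 2); linarith
    rw [hηdef]
    field_simp
  have limmid : Tendsto mid l (nhds 0) := by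
    have hev1 : ∀ᶠ δ in l, 0 ≤ mid δ := by
      filter_upwards [hmem, hhpos, hμpos, hηpos] with δ hδ h1 h2 h3
      rw [hmiddef]
      positivity
    have hev2 : ∀ᶠ δ in l, mid δ ≤ (3 * (-Real.log (h δ) / Real.log 2) + 1) * (μ δ + η δ) := by
      filter_upwards [hmem, hhpos.and (hh_lim.eventually_lt_const one_pos), hμpos, hηpos]
        with δ hδ h1 h2 h3
      obtain ⟨hh1, hh2⟩ := h1
      have hlb : Real.logb 2 (1 / h δ) = -Real.log (h δ) / Real.log 2 := by
        rw [Real.logb, Real.log_div one_ne_zero (ne_of_gt hh1), Real.log_one]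
        ring
      have hnng : 0 ≤ 3 * Real.logb 2 (1 / h δ) := by
        have : (1:ℝ) ≤ 1 / h δ := by
          rw [le_div_iff₀ hh1, one_mul]; exact hh2.le
        have := Real.logb_nonneg (by norm_num : (1:ℝ) < 2) this
        linarith
      have hceil : (NN δ : ℝ) ≤ 3 * Real.logb 2 (1 / h δ) + 1 :=
        (Nat.ceil_lt_add_one hnng).le
      rw [hmiddef]
      have hsum : 0 ≤ μ δ + η δ := by positivity
      calc (NN δ : ℝ) * (μ δ + η δ) ≤ (3 * Real.logb 2 (1 / h δ) + 1) * (μ δ + η δ) :=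
            mul_le_mul_of_nonneg_right hceil hsum
        _ = (3 * (-Real.log (h δ) / Real.log 2) + 1) * (μ δ + η δ) := by rw [hlb]
    exact tendsto_of_tendsto_of_tendsto_of_le_of_le' tendsto_const_nhds limbnd hev1 hev2
  -- the error term
  set errh : ℝ → ℝ := fun δ => lamY * h δ + lamZ * c δ + lamY * lamZ * mid δ with herrhdef
  have limerrh : Tendsto errh l (nhds 0) := by
    have h1 : Tendsto (fun δ => lamY * h δ + lamZ * c δ + lamY * lamZ * mid δ) l
        (nhds (lamY * 0 + lamZ * 0 + lamY * lamZ * 0)) :=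
      (((tendsto_const_nhds (x := lamY)).mul hh_lim).add
        ((tendsto_const_nhds (x := lamZ)).mul hc0)).add
        ((tendsto_const_nhds (x := lamY * lamZ)).mul limmid)
    simpa using h1
  set lowf : ℝ → ℝ := fun δ => FY δ / h δ + FZ δ / h δ - (FY δ / h δ) * FZ δ with hlowfdef
  -- apply the probability bound
  have hbound : ∀ᶠ δ in l,
      |(1 / h δ) * (P {ω | δ * f (Y ω / δ) (Z ω / μ δ) < h δ}).toReal - lowf δ| ≤ errh δ := by
    filter_upwards [hmem, hhpos, hμpos] with δ hδ hh1 hm1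
    have hδ0 : (0:ℝ) < δ := hδ
    -- hTN
    have hTN : 1 / h δ ≤ h δ ^ 2 * 2 ^ NN δ := by
      have h1 : (3 : ℝ) * Real.logb 2 (1 / h δ) ≤ (NN δ : ℝ) := Nat.le_ceil _
      have h2 : ((2:ℝ) ^ (3 * Real.logb 2 (1 / h δ))) ≤ (2:ℝ) ^ ((NN δ : ℝ)) :=
        Real.rpow_le_rpow_of_exponent_le (by norm_num) h1
      have h3 : (2:ℝ) ^ (3 * Real.logb 2 (1 / h δ)) = (1 / h δ) ^ (3:ℝ) := by
        rw [mul_comm, Real.rpow_mul (by norm_num : (0:ℝ) ≤ 2), Real.rpow_logb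
          (by norm_num) (by norm_num) (by positivity)]
      have h4 : (2:ℝ) ^ ((NN δ : ℝ)) = (2:ℝ) ^ (NN δ) := by
        rw [Real.rpow_natCast]
      rw [h3, h4] at h2
      have h5 : (1 / h δ) ^ (3:ℝ) = (1 / h δ) ^ (3:ℕ) := by
        rw [show (3:ℝ) = ((3:ℕ):ℝ) by norm_num, Real.rpow_natCast]
      rw [h5] at h2
      calc 1 / h δ = h δ ^ 2 * (1 / h δ) ^ (3:ℕ) := by field_simp
        _ ≤ h δ ^ 2 * 2 ^ NN δ := by
            apply mul_le_mul_of_nonneg_left h2 (by positivity)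
    have habs := la_prob_bounds P hlamY hlamZ hY hZ hYdist hZdist hindep hδ0 hm1 hh1
      (NN δ) hTN (η δ) (c δ) rfl rfl
    rw [abs_le] at habs ⊢
    obtain ⟨hab1, hab2⟩ := habs
    have e1 : (1 / h δ) * (FY δ + FZ δ - FY δ * FZ δ) = lowf δ := by
      rw [hlowfdef]
      field_simp
    have e2 : (1 / h δ) * (lamY * h δ ^ 2 + lamZ * (c δ * h δ)
        + (NN δ : ℝ) * (lamY * lamZ * c δ)) = errh δ := by
      rw [herrhdef, hmiddef, hcdef]
      field_simp
    have hinv : (0:ℝ) < 1 / h δ := by positivity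
    constructor
    · nlinarith [mul_le_mul_of_nonneg_left hab1 hinv.le]
    · nlinarith [mul_le_mul_of_nonneg_left hab2 hinv.le]
  -- final squeeze
  have hlo : Tendsto (fun δ => lowf δ - errh δ) l (nhds (lamY + a * lamZ)) := by
    have := limlow.sub limerrh; simpa using this
  have hhi : Tendsto (fun δ => lowf δ + errh δ) l (nhds (lamY + a * lamZ)) := by
    have := limlow.add limerrh; simpa using this
  refine tendsto_of_tendsto_of_tendsto_of_le_of_le' hlo hhi ?_ ?_
  · filter_upwards [hbound] with δ hb
    rw [abs_le] at hb
    linarith [hb.1]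
  · filter_upwards [hbound] with δ hb
    rw [abs_le] at hb
    linarith [hb.2]
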